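/- arXiv:2005.03387 — 12 statements merged into one kernel-verified Lean document; each statement's English description precedes it below -/
import Mathlib

section
/- Let R be a commutative elementary divisor ring and let A be a full nonsingular 2×2 matrix over R (i.e. det A ≠ 0 and the two-sided ideal of the matrix ring R^{2×2} generated by A is all of R^{2×2}). Then there exist invertible matrices P, Q ∈ GL_2(R) such that P·A·Q is a nontrivial clear element of the ring R^{2×2}, i.e. P·A·Q = r + u where u is a unit of R^{2×2} and r is a unit-regular element of R^{2×2} with r ≠ 0 and r not a unit. -/
/-- An element `r` of a ring is unit-regular if `r = r * u * r` for some unit `u`. -/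
def IsUnitRegular {R : Type*} [Ring R] (r : R) : Prop :=
  ∃ u : R, IsUnit u ∧ r * u * r = r

/-- An element is clear if it is the sum of a unit-regular element and a unit. -/
def IsClearElem {R : Type*} [Ring R] (a : R) : Prop :=
  ∃ r u : R, IsUnitRegular r ∧ IsUnit u ∧ a = r + u

/-- A ring is clear if every element is clear. -/
def IsClearRing (R : Type*) [Ring R] : Prop :=
  ∀ a : R, IsClearElem a

/-- A clear element is nontrivial if the unit-regular summand is nonzero and not a unit. -/
def IsNontrivialClearElem {R : Type*} [Ring R] (a : R) : Prop :=
  ∃ r u : R, IsUnitRegular r ∧ IsUnit u ∧ a = r + u ∧ r ≠ 0 ∧ ¬ IsUnit r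

/-- A square matrix is full if the two-sided ideal it generates is the whole matrix ring. -/
def Matrix.IsFull {R : Type*} [Ring R] {n : ℕ} (A : Matrix (Fin n) (Fin n) R) : Prop :=
  TwoSidedIdeal.span {A} = ⊤

/-- A commutative ring is an elementary divisor ring if every rectangular matrix admits
diagonal reduction with successive divisibility of the diagonal entries. -/
def IsElementaryDivisorRing (R : Type*) [CommRing R] : Prop :=
  ∀ (m n : ℕ) (A : Matrix (Fin m) (Fin n) R),
    ∃ (P : Matrix (Fin m) (Fin m) R) (Q : Matrix (Fin n) (Fin n) R),
      IsUnit P ∧ IsUnit Q ∧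
      (∀ (i : Fin m) (j : Fin n), (i : ℕ) ≠ (j : ℕ) → (P * A * Q) i j = 0) ∧
      (∀ (k : ℕ) (h1 : k < m) (h2 : k < n) (h3 : k + 1 < m) (h4 : k + 1 < n),
        (P * A * Q) ⟨k, h1⟩ ⟨k, h2⟩ ∣ (P * A * Q) ⟨k + 1, h3⟩ ⟨k + 1, h4⟩)

theorem stmt_0 {R : Type*} [CommRing R] (hR : IsElementaryDivisorRing R)
    (A : Matrix (Fin 2) (Fin 2) R) (hA : A.det ≠ 0) (hfull : A.IsFull) :
    ∃ P Q : Matrix (Fin 2) (Fin 2) R, IsUnit P ∧ IsUnit Q ∧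
      IsNontrivialClearElem (P * A * Q) := by
  have hnt : Nontrivial R := by
    by_contra h
    rw [not_nontrivial_iff_subsingleton] at h
    exact hA (Subsingleton.elim _ _)
  obtain ⟨P, Q, hP, hQ, hdiag, hdiv⟩ := hR 2 2 A
  set D := P * A * Q with hD
  set a := D 0 0 with ha
  set b := D 1 1 with hb
  have hab : a ∣ b := hdiv 0 (by omega) (by omega) (by omega) (by omega)
  have h01 : D 0 1 = 0 := hdiag 0 1 (by decide)
  have h10 : D 1 0 = 0 := hdiag 1 0 (by decide)
  have hDeq : D = !![a, 0; 0, b] := by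
    ext i j
    fin_cases i <;> fin_cases j <;>
      simp [ha, hb, h01, h10]
  -- a is a unit, since D is full
  have hua : IsUnit a := by
    by_contra hna
    set I : Ideal R := Ideal.span {a} with hI
    have hItop : I ≠ ⊤ := fun h => hna (Ideal.span_singleton_eq_top.mp h)
    set φ : Matrix (Fin 2) (Fin 2) R →+* Matrix (Fin 2) (Fin 2) (R ⧸ I) :=
      (Ideal.Quotient.mk I).mapMatrix with hφ
    have hma : Ideal.Quotient.mk I a = 0 := by
      rw [Ideal.Quotient.eq_zero_iff_mem]
      exact Ideal.subset_span rfl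
    have hmb : Ideal.Quotient.mk I b = 0 := by
      rw [Ideal.Quotient.eq_zero_iff_mem]
      exact Ideal.mem_span_singleton.mpr hab
    have hφD : φ D = 0 := by
      rw [hDeq]
      ext i j
      fin_cases i <;> fin_cases j <;>
        simp [hφ, RingHom.mapMatrix_apply, hma, hmb]
    have hφA : φ A = 0 := by
      have hmul : φ P * φ A * φ Q = 0 := by
        rw [← map_mul, ← map_mul, ← hD, hφD]
      obtain ⟨uP, huP⟩ := hP.map φ
      obtain ⟨uQ, huQ⟩ := hQ.map φ
      have h2 : φ A = (↑uP⁻¹ : Matrix (Fin 2) (Fin 2) (R ⧸ I)) * (φ P * φ A * φ Q) * (↑uQ⁻¹ : Matrix (Fin 2) (Fin 2) (R ⧸ I)) := by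
        rw [← huP, ← huQ]
        simp [mul_assoc]
      rw [hmul, mul_zero, zero_mul] at h2
      exact h2
    have hone : (1 : Matrix (Fin 2) (Fin 2) R) ∈ TwoSidedIdeal.span {A} := by
      rw [hfull]; trivial
    have h1ker : (1 : Matrix (Fin 2) (Fin 2) R) ∈ TwoSidedIdeal.ker φ := by
      refine TwoSidedIdeal.mem_span_iff.mp hone _ ?_
      intro x hx
      rw [Set.mem_singleton_iff] at hx
      rw [hx, SetLike.mem_coe, TwoSidedIdeal.mem_ker]
      exact hφA
    rw [TwoSidedIdeal.mem_ker, map_one] at h1ker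
    have h10' : (1 : R ⧸ I) = 0 := by
      have := congrFun (congrFun h1ker 0) 0
      simpa using this
    have h1I : (1 : R) ∈ I := by
      rw [← Ideal.Quotient.eq_zero_iff_mem, map_one]
      exact h10'
    exact hItop ((Ideal.eq_top_iff_one I).mpr h1I)
  obtain ⟨ua, hua'⟩ := hua
  set a' : R := ↑ua⁻¹ with ha'
  have ha'a : a' * a = 1 := by rw [ha', ← hua']; exact ua.inv_mul
  -- the final matrices
  refine ⟨!![1,0;1,1] * !![a',0;0,1] * P, Q * !![1,1;0,1], ?_, ?_, ?_⟩
  · refine (IsUnit.mul ?_ ?_).mul hP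
    · rw [Matrix.isUnit_iff_isUnit_det]; simp [Matrix.det_fin_two_of]
    · rw [Matrix.isUnit_iff_isUnit_det]
      simpa [Matrix.det_fin_two_of] using IsUnit.of_mul_eq_one (a := a') a ha'a
  · refine hQ.mul ?_
    rw [Matrix.isUnit_iff_isUnit_det]; simp [Matrix.det_fin_two_of]
  · refine ⟨!![1,0;0,0], !![0,1;1,1+b], ⟨1, isUnit_one, ?_⟩, ?_, ?_, ?_, ?_⟩
    · ext i j; fin_cases i <;> fin_cases j <;>
        simp [Matrix.mul_apply, Fin.sum_univ_two]
    · rw [Matrix.isUnit_iff_isUnit_det]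
      simp [Matrix.det_fin_two_of]
    · have : !![1,0;1,1] * !![a',0;0,1] * P * A * (Q * !![1,1;0,1])
          = !![1,0;1,1] * !![a',0;0,1] * D * !![1,1;0,1] := by
        simp only [hD, mul_assoc]
      rw [this, hDeq]
      ext i j
      fin_cases i <;> fin_cases j <;>
        simp [Matrix.mul_apply, Fin.sum_univ_two, ha'a]
    · intro h
      have := congrFun (congrFun h 0) 0
      simp at this
    · intro h
      rw [Matrix.isUnit_iff_isUnit_det] at h
      simp [Matrix.det_fin_two_of] at h
end

section
/- Let R be a commutative elementary divisor ring. Then every full nonsingular 2×2 matrix A over R (i.e. det A ≠ 0 and the two-sided ideal of R^{2×2} generated by A is all of R^{2×2}) is a nontrivial clear element of the ring R^{2×2}: A = r + u where u is a unit of R^{2×2} and r is a unit-regular element of R^{2×2} with r ≠ 0 and r not a unit. -/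
theorem stmt_1 {R : Type*} [CommRing R] (hR : IsElementaryDivisorRing R)
    (A : Matrix (Fin 2) (Fin 2) R) (hA : A.det ≠ 0) (hfull : A.IsFull) :
    IsNontrivialClearElem A := by
  have hnt : Nontrivial R := nontrivial_of_ne _ _ hA
  obtain ⟨P, Q, hP, hQ, hdiag, hdvd⟩ := hR 2 2 A
  set P' : Matrix (Fin 2) (Fin 2) R := ↑hP.unit⁻¹ with hP'def
  set Q' : Matrix (Fin 2) (Fin 2) R := ↑hQ.unit⁻¹ with hQ'def
  have hP'P : P' * P = 1 := hP.val_inv_mul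
  have hPP' : P * P' = 1 := hP.mul_val_inv
  have hQ'Q : Q' * Q = 1 := hQ.val_inv_mul
  have hQQ' : Q * Q' = 1 := hQ.mul_val_inv
  have hP'u : IsUnit P' := (hP.unit⁻¹).isUnit
  have hQ'u : IsUnit Q' := (hQ.unit⁻¹).isUnit
  set D : Matrix (Fin 2) (Fin 2) R := P * A * Q with hDdef
  have key : ∀ X : Matrix (Fin 2) (Fin 2) R, P' * (P * X * Q) * Q' = X := by
    intro X
    calc P' * (P * X * Q) * Q' = (P' * P) * X * (Q * Q') := by noncomm_ring
    _ = X := by rw [hP'P, hQQ', one_mul, mul_one]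
  have key2 : ∀ X : Matrix (Fin 2) (Fin 2) R, P * (P' * X * Q') * Q = X := by
    intro X
    calc P * (P' * X * Q') * Q = (P * P') * X * (Q' * Q) := by noncomm_ring
    _ = X := by rw [hPP', hQ'Q, one_mul, mul_one]
  have hd12 : D 0 0 ∣ D 1 1 := by
    have := hdvd 0 (by norm_num) (by norm_num) (by norm_num) (by norm_num)
    exact this
  have hD01 : D 0 1 = 0 := hdiag 0 1 (by norm_num)
  have hD10 : D 1 0 = 0 := hdiag 1 0 (by norm_num)
  set d1 := D 0 0 with hd1def
  set d2 := D 1 1 with hd2def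
  have hAeq : A = P' * D * Q' := by rw [hDdef]; exact (key A).symm
  -- all entries of D lie in the ideal (d1)
  have hDmem : ∀ k l : Fin 2, D k l ∈ Ideal.span {d1} := by
    intro k l
    fin_cases k <;> fin_cases l
    · exact Ideal.mem_span_singleton_self _
    · exact hD01 ▸ Ideal.zero_mem _
    · exact hD10 ▸ Ideal.zero_mem _
    · exact Ideal.mem_span_singleton.2 hd12
  -- all entries of A lie in (d1)
  have hAmem : ∀ i j : Fin 2, A i j ∈ Ideal.span {d1} := by
    intro i j
    rw [hAeq]
    simp only [Matrix.mul_apply]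
    refine Ideal.sum_mem _ fun l _ => Ideal.mul_mem_right _ _ ?_
    exact Ideal.sum_mem _ fun k _ => Ideal.mul_mem_left _ _ (hDmem k l)
  -- the two-sided ideal of matrices with entries in (d1)
  let J : TwoSidedIdeal (Matrix (Fin 2) (Fin 2) R) := TwoSidedIdeal.mk'
    {B : Matrix (Fin 2) (Fin 2) R | ∀ i j, B i j ∈ Ideal.span {d1}}
    (fun i j => by simp)
    (fun {x y} hx hy i j => by
      simpa [Matrix.add_apply] using Ideal.add_mem _ (hx i j) (hy i j))
    (fun {x} hx i j => by simpa using neg_mem (hx i j))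
    (fun {x y} hy i j => by
      simp only [Matrix.mul_apply]
      exact Ideal.sum_mem _ fun k _ => Ideal.mul_mem_left _ _ (hy k j))
    (fun {x y} hx i j => by
      simp only [Matrix.mul_apply]
      exact Ideal.sum_mem _ fun k _ => Ideal.mul_mem_right _ _ (hx i k))
  have honemem : (1 : Matrix (Fin 2) (Fin 2) R) ∈ TwoSidedIdeal.span {A} := by
    rw [hfull]; trivial
  have h1J : ∀ i j : Fin 2, (1 : Matrix (Fin 2) (Fin 2) R) i j ∈ Ideal.span {d1} := by
    have := TwoSidedIdeal.mem_span_iff.mp honemem J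
      (by intro B hB; rw [Set.mem_singleton_iff] at hB; subst hB
          exact (TwoSidedIdeal.mem_mk' _ _ _ _ _ _ _).2 hAmem)
    exact (TwoSidedIdeal.mem_mk' _ _ _ _ _ _ _).1 this
  have hd1 : IsUnit d1 := by
    have h1 : (1 : R) ∈ Ideal.span {d1} := by
      have := h1J 0 0
      rwa [Matrix.one_apply_eq] at this
    exact isUnit_of_dvd_one (Ideal.mem_span_singleton.1 h1)
  -- the decomposition of D
  set r0 : Matrix (Fin 2) (Fin 2) R := !![0, 0; 1, d2 - d1] with hr0def
  set u0 : Matrix (Fin 2) (Fin 2) R := !![d1, 0; -1, d1] with hu0def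
  set w : Matrix (Fin 2) (Fin 2) R := !![0, 1; 1, 0] with hwdef
  have hsum : D = r0 + u0 := by
    ext i j
    fin_cases i <;> fin_cases j <;>
      simp [hr0def, hu0def, Matrix.add_apply, hD01, hD10, ← hd1def, ← hd2def]
  have hwu : IsUnit w := by
    rw [Matrix.isUnit_iff_isUnit_det]
    simp [hwdef, Matrix.det_fin_two_of]
  have hu0u : IsUnit u0 := by
    rw [Matrix.isUnit_iff_isUnit_det]
    simp only [hu0def, Matrix.det_fin_two_of]
    simpa using hd1.mul hd1
  have hreg : r0 * w * r0 = r0 := by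
    ext i j
    fin_cases i <;> fin_cases j <;>
      simp [hr0def, hwdef, Matrix.mul_apply, Fin.sum_univ_two]
  refine ⟨P' * r0 * Q', P' * u0 * Q',
    ⟨Q * w * P, (hQ.mul hwu).mul hP, ?_⟩,
    (hP'u.mul hu0u).mul hQ'u, ?_, ?_, ?_⟩
  · calc (P' * r0 * Q') * (Q * w * P) * (P' * r0 * Q')
        = P' * (((r0 * (Q' * Q)) * w * (P * P')) * r0) * Q' := by noncomm_ring
    _ = P' * r0 * Q' := by rw [hQ'Q, hPP', mul_one, mul_one, hreg]
  · rw [hAeq, hsum, mul_add, add_mul]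
  · intro h
    have h2 := key2 r0
    rw [h, mul_zero, zero_mul] at h2
    have h3 := congrFun (congrFun h2.symm 1) 0
    simp [hr0def] at h3
  · intro h
    rw [Matrix.isUnit_iff_isUnit_det] at h
    simp [Matrix.det_mul, hr0def, Matrix.det_fin_two_of] at h
end

section
/- Let R be an associative ring with identity. Every unit-regular element of R is clear: if a = a·u·a for some unit u of R, then a = r + v for some unit-regular element r of R and some unit v of R. -/
theorem stmt_4 {R : Type*} [Ring R] (a : R) (h : IsUnitRegular a) :
    IsClearElem a := by
  obtain ⟨u, hu, hau⟩ := h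
  obtain ⟨U, rfl⟩ := hu
  refine ⟨a - ↑U⁻¹, ↑U⁻¹, ⟨-↑U, (U.isUnit.neg), ?_⟩, (U⁻¹).isUnit, by noncomm_ring⟩
  have h1 : (↑U : R) * ↑U⁻¹ = 1 := U.mul_inv
  have h2 : (↑U⁻¹ : R) * ↑U = 1 := U.inv_mul
  calc (a - ↑U⁻¹) * -↑U * (a - ↑U⁻¹)
      = -(a * ↑U * a) + a * (↑U * ↑U⁻¹) + (↑U⁻¹ * ↑U) * a - ↑U⁻¹ * (↑U * ↑U⁻¹) := by noncomm_ring
    _ = a - ↑U⁻¹ := by rw [hau, h1, h2]; noncomm_ring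
end

section
/- Let R and S be rings and let f : R → S be a surjective ring homomorphism. If R is a clear ring then S is a clear ring. -/
theorem stmt_5 {R S : Type*} [Ring R] [Ring S] (f : R →+* S)
    (hf : Function.Surjective f) (hR : IsClearRing R) : IsClearRing S := by
  intro a
  obtain ⟨b, rfl⟩ := hf a
  obtain ⟨r, u, ⟨v, hv, hrv⟩, hu, rfl⟩ := hR b
  exact ⟨f r, f u, ⟨f v, hv.map f, by rw [← map_mul, ← map_mul, hrv]⟩, hu.map f, by
    rw [map_add]⟩
end

section
/- Let (R_i)_{i ∈ I} be a family of rings. If every R_i is a clear ring, then the direct product Π_{i ∈ I} R_i is a clear ring. -/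
theorem stmt_6 {I : Type*} (R : I → Type*) [∀ i, Ring (R i)]
    (h : ∀ i, IsClearRing (R i)) : IsClearRing (∀ i, R i) := by
  intro a
  choose r u hr hu ha using fun i => h i (a i)
  choose v hv hrv using hr
  refine ⟨r, u, ⟨v, ?_, ?_⟩, ?_, ?_⟩
  · exact ⟨⟨v, fun i => (((hv i).unit⁻¹ : (R i)ˣ) : R i), funext fun i => by simp [(hv i).unit_spec], funext fun i => by simp [(hv i).unit_spec]⟩, rfl⟩
  · funext i; exact hrv i
  · exact ⟨⟨u, fun i => (((hu i).unit⁻¹ : (R i)ˣ) : R i), funext fun i => by simp [(hu i).unit_spec], funext fun i => by simp [(hu i).unit_spec]⟩, rfl⟩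
  · funext i; exact ha i
end

section
/- Let R be an associative ring with identity and a ∈ R. Then a is a clear element if and only if there exists a unit u of R such that both u·a and a·u are clean elements of R. -/
/-- An element is clean if it is the sum of an idempotent and a unit. -/
def IsCleanElem {R : Type*} [Ring R] (a : R) : Prop :=
  ∃ e u : R, IsIdempotentElem e ∧ IsUnit u ∧ a = e + u

/-- A ring is clean if every element is clean. -/
def IsCleanRing (R : Type*) [Ring R] : Prop :=
  ∀ a : R, IsCleanElem a

theorem stmt_7 {R : Type*} [Ring R] (a : R) :
    IsClearElem a ↔
      ∃ u : R, IsUnit u ∧ IsCleanElem (u * a) ∧ IsCleanElem (a * u) := by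
  constructor
  · rintro ⟨r, w, ⟨u, hu, hur⟩, hw, rfl⟩
    refine ⟨u, hu, ⟨u * r, u * w, ?_, hu.mul hw, by noncomm_ring⟩,
      ⟨r * u, w * u, ?_, hw.mul hu, by noncomm_ring⟩⟩
    · show u * r * (u * r) = u * r
      calc u * r * (u * r) = u * (r * u * r) := by noncomm_ring
        _ = u * r := by rw [hur]
    · show r * u * (r * u) = r * u
      calc r * u * (r * u) = r * u * r * u := by noncomm_ring
        _ = r * u := by rw [hur]
  · rintro ⟨u, hu, -, e, w, he, hw, hau⟩
    obtain ⟨U, rfl⟩ := hu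
    refine ⟨e * ↑U⁻¹, w * ↑U⁻¹, ⟨U, U.isUnit, ?_⟩, hw.mul U⁻¹.isUnit, ?_⟩
    · calc e * ↑U⁻¹ * ↑U * (e * ↑U⁻¹) = e * (↑U⁻¹ * ↑U) * e * ↑U⁻¹ := by noncomm_ring
        _ = e * ↑U⁻¹ := by rw [U.inv_mul, mul_one, he]
    · have : a = (a * ↑U) * ↑U⁻¹ := by rw [mul_assoc, U.mul_inv, mul_one]
      rw [this, hau]; noncomm_ring
end

section
/- Let R be a ring of unit-regular stable range 1, i.e. for all a, b ∈ R with aR + bR = R there exists a unit-regular element r of R such that a + b·r is a unit of R. Then R is a clear ring. -/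
/-- A ring has unit-regular stable range 1 if whenever `aR + bR = R` there is a
unit-regular `r` with `a + b * r` a unit. -/
def HasUnitRegularStableRange1 (R : Type*) [Ring R] : Prop :=
  ∀ a b : R, (∃ x y : R, a * x + b * y = 1) →
    ∃ r : R, IsUnitRegular r ∧ IsUnit (a + b * r)

theorem stmt_8 {R : Type*} [Ring R] (h : HasUnitRegularStableRange1 R) :
    IsClearRing R := by
  intro a
  obtain ⟨r, hr, hu⟩ := h a (-1) ⟨0, -1, by noncomm_ring⟩
  exact ⟨r, a + -1 * r, hr, hu, by noncomm_ring⟩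
end

section
/- Let R be a commutative ring. Every clear element of R is 2-clean: if a = r + u with r unit-regular and u a unit of R, then a = e + v + w where e is an idempotent of R and v, w are units of R. Consequently every commutative clear ring is 2-clean. -/
/-- An element is 2-clean if it is the sum of an idempotent and two units. -/
def Is2CleanElem {R : Type*} [Ring R] (a : R) : Prop :=
  ∃ e u v : R, IsIdempotentElem e ∧ IsUnit u ∧ IsUnit v ∧ a = e + u + v

/-- A ring is 2-clean if every element is 2-clean. -/
def Is2CleanRing (R : Type*) [Ring R] : Prop :=
  ∀ a : R, Is2CleanElem a

theorem stmt_9 {R : Type*} [CommRing R] :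
    (∀ a : R, IsClearElem a → Is2CleanElem a) ∧
      (IsClearRing R → Is2CleanRing R) := by
  have main : ∀ a : R, IsClearElem a → Is2CleanElem a := by
    rintro a ⟨r, v, ⟨u, hu, hrur⟩, hv, rfl⟩
    refine ⟨1 - r * u, r + r * u - 1, v, ?_, ?_, hv, by ring⟩
    · have he : (r * u) * (r * u) = r * u := by linear_combination u * hrur
      unfold IsIdempotentElem
      linear_combination he
    · refine IsUnit.of_mul_eq_one (r * u * u + r * u - 1) ?_
      linear_combination (u ^ 2 + 2 * u + 1) * hrur
  exact ⟨main, fun h a => main a (h a)⟩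
end

section
/- Let R be an associative ring with identity. The following are equivalent: (1) R is a clear ring and R has no nontrivial idempotents (its only idempotents are 0 and 1); (2) R has no nontrivial idempotents and every element a ∈ R is either a unit of R or 2-good (a sum of two units of R). -/
theorem stmt_11 {R : Type*} [Ring R] :
    (IsClearRing R ∧ ∀ e : R, IsIdempotentElem e → e = 0 ∨ e = 1) ↔
      ((∀ e : R, IsIdempotentElem e → e = 0 ∨ e = 1) ∧
        ∀ a : R, IsUnit a ∨ ∃ u v : R, IsUnit u ∧ IsUnit v ∧ a = u + v) := by

  constructor
  · rintro ⟨hclear, hid⟩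
    refine ⟨hid, fun a => ?_⟩
    obtain ⟨r, u, ⟨w, hw, hrw⟩, hu, rfl⟩ := hclear a
    -- r*w is idempotent
    have hidem : IsIdempotentElem (r * w) := by
      unfold IsIdempotentElem
      calc r * w * (r * w) = r * w * r * w := by noncomm_ring
        _ = r * w := by rw [hrw]
    rcases hid _ hidem with h0 | h1
    · have hr0 : r = 0 := by
        have : r * w * r = 0 := by rw [h0, zero_mul]
        rw [hrw] at this; exact this
      left; simpa [hr0] using hu
    · -- r is a unit
      have hidem2 : IsIdempotentElem (w * r) := by
        unfold IsIdempotentElem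
        calc w * r * (w * r) = w * (r * w * r) := by noncomm_ring
          _ = w * r := by rw [hrw]
      rcases hid _ hidem2 with h0 | h2
      · have hr0 : r = 0 := by
          have h := hrw
          rw [mul_assoc, h0, mul_zero] at h
          exact h.symm
        rw [hr0, zero_mul] at h1
        haveI : Subsingleton R := subsingleton_of_zero_eq_one h1
        right; exact ⟨r, u, isUnit_of_subsingleton r, hu, rfl⟩
      · right; exact ⟨r, u, ⟨⟨r, w, h1, h2⟩, rfl⟩, hu, rfl⟩
  · rintro ⟨hid, h2g⟩
    refine ⟨fun a => ?_, hid⟩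
    rcases h2g a with ha | ⟨u, v, hu, hv, rfl⟩
    · exact ⟨0, a, ⟨1, isUnit_one, by simp⟩, ha, by simp⟩
    · obtain ⟨U, hU⟩ := hu
      refine ⟨u, v, ⟨(↑U⁻¹ : R), U⁻¹.isUnit, ?_⟩, hv, rfl⟩
      rw [← hU]
      simp [Units.mul_inv, Units.inv_mul]
end

section
/- Let R be a commutative elementary divisor ring and let A be a full 2×2 matrix over R (i.e. the two-sided ideal of R^{2×2} generated by A is all of R^{2×2}). Then there exist invertible matrices P, Q ∈ GL_2(R) and an element d ∈ R such that P·A·Q is the diagonal matrix with diagonal entries 1 and d. -/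
theorem full_aux {R : Type*} [CommRing R] (A : Matrix (Fin 2) (Fin 2) R)
    (hfull : TwoSidedIdeal.span {A} = ⊤) :
    (1 : R) ∈ Ideal.span (Set.range fun p : Fin 2 × Fin 2 => A p.1 p.2) := by
  set I : Ideal R := Ideal.span (Set.range fun p : Fin 2 × Fin 2 => A p.1 p.2)
  let S : TwoSidedIdeal (Matrix (Fin 2) (Fin 2) R) := TwoSidedIdeal.mk'
    {M | ∀ i j, M i j ∈ I}
    (fun i j => by simp)
    (fun {x y} hx hy i j => by simpa using add_mem (hx i j) (hy i j))
    (fun {x} hx i j => by simpa using neg_mem (hx i j))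
    (fun {x y} hy i j => by
      rw [Matrix.mul_apply]
      exact Ideal.sum_mem _ fun k _ => I.mul_mem_left _ (hy k j))
    (fun {x y} hx i j => by
      rw [Matrix.mul_apply]
      exact Ideal.sum_mem _ fun k _ => I.mul_mem_right _ (hx i k))
  have hA : A ∈ S := by
    refine (TwoSidedIdeal.mem_mk' _ _ _ _ _ _ _).mpr ?_
    exact fun i j => Ideal.subset_span ⟨(i, j), rfl⟩
  have h1 : (1 : Matrix (Fin 2) (Fin 2) R) ∈ TwoSidedIdeal.span {A} := by
    rw [hfull]; trivial
  rw [TwoSidedIdeal.mem_span_iff] at h1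
  have := h1 S (by simpa using hA)
  replace this := (TwoSidedIdeal.mem_mk' _ _ _ _ _ _ _).mp this
  simpa using this 0 0

theorem stmt_12 {R : Type*} [CommRing R] (hR : IsElementaryDivisorRing R)
    (A : Matrix (Fin 2) (Fin 2) R) (hfull : A.IsFull) :
    ∃ (P Q : Matrix (Fin 2) (Fin 2) R) (d : R),
      IsUnit P ∧ IsUnit Q ∧ P * A * Q = Matrix.diagonal ![1, d] := by
  obtain ⟨P, Q, hP, hQ, hoff, hdvd⟩ := hR 2 2 A
  set B := P * A * Q with hB
  have h01 : B 0 1 = 0 := hoff 0 1 (by decide)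
  have h10 : B 1 0 = 0 := hoff 1 0 (by decide)
  obtain ⟨c, hc⟩ := hdvd 0 (by norm_num) (by norm_num) (by norm_num) (by norm_num)
  set a := B 0 0 with ha
  -- B = diagonal ![a, B 1 1]
  have hBdiag : B = Matrix.diagonal ![a, B 1 1] := by
    ext i j
    fin_cases i <;> fin_cases j <;>
      simp [Matrix.diagonal, h01, h10, ha]
  -- every entry of B lies in span {a}
  have hBmem : ∀ i j : Fin 2, B i j ∈ Ideal.span {a} := by
    intro i j
    fin_cases i <;> fin_cases j
    · exact Ideal.subset_span rfl
    · simp [h01]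
    · simp [h10]
    · have hcc : B 1 1 = a * c := hc
      show B 1 1 ∈ _
      rw [hcc]
      exact Ideal.mul_mem_right _ _ (Ideal.subset_span rfl)
  -- A = P⁻¹ * B * Q⁻¹, so entries of A lie in span {a}
  have e1 : (↑hP.unit⁻¹ : Matrix (Fin 2) (Fin 2) R) * P = 1 := by
    exact hP.val_inv_mul
  have e2 : Q * (↑hQ.unit⁻¹ : Matrix (Fin 2) (Fin 2) R) = 1 := by
    exact hQ.mul_val_inv
  have hAeq : A = (↑hP.unit⁻¹ : Matrix (Fin 2) (Fin 2) R) * B * (↑hQ.unit⁻¹ : Matrix (Fin 2) (Fin 2) R) := by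
    rw [hB]
    calc A = 1 * A * 1 := by simp
      _ = ((↑hP.unit⁻¹ : Matrix (Fin 2) (Fin 2) R) * P) * A * (Q * ↑hQ.unit⁻¹) := by
          rw [e1, e2]
      _ = ↑hP.unit⁻¹ * (P * A * Q) * ↑hQ.unit⁻¹ := by
          simp only [Matrix.mul_assoc]
  have hAmem : ∀ i j : Fin 2, A i j ∈ Ideal.span {a} := by
    intro i j
    rw [hAeq]
    rw [Matrix.mul_apply]
    refine Ideal.sum_mem _ fun k _ => Ideal.mul_mem_right _ _ ?_
    rw [Matrix.mul_apply]
    exact Ideal.sum_mem _ fun l _ => Ideal.mul_mem_left _ _ (hBmem l k)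
  -- a is a unit
  have h1 := full_aux A hfull
  have haunit : IsUnit a := by
    rw [← Ideal.span_singleton_eq_top]
    rw [Ideal.eq_top_iff_one]
    refine Ideal.span_le.mpr ?_ h1
    rintro x ⟨⟨i, j⟩, rfl⟩
    exact hAmem i j
  obtain ⟨v, hv⟩ := haunit.exists_left_inv
  refine ⟨Matrix.diagonal ![v, 1] * P, Q, B 1 1, ?_, hQ, ?_⟩
  · refine IsUnit.mul ?_ hP
    rw [Matrix.isUnit_iff_isUnit_det, Matrix.det_diagonal]
    simpa using IsUnit.of_mul_eq_one a hv
  · rw [Matrix.mul_assoc, Matrix.mul_assoc, ← Matrix.mul_assoc P, ← hB, hBdiag,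
      Matrix.diagonal_mul_diagonal]
    ext i j
    fin_cases i <;> fin_cases j <;> simp [Matrix.diagonal, hv]
end

section
/- Let R be a commutative principal ideal domain. Then every full 2×2 matrix A over R (i.e. the two-sided ideal of R^{2×2} generated by A is all of R^{2×2}) is a clear element of the matrix ring R^{2×2}: A = r + u where r is a unit-regular element and u is a unit of R^{2×2}. -/
open Matrix

section ClearAux

/-- Every unit is unit-regular. -/
lemma my_ureg {S : Type*} [Ring S] {r : S} (h : IsUnit r) : IsUnitRegular r := by
  obtain ⟨w, rfl⟩ := h
  exact ⟨↑w⁻¹, w⁻¹.isUnit, by rw [Units.mul_inv, one_mul]⟩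

/-- A matrix equivalent to one with a `1` in the upper-left corner is clear:
it is the sum of two units. -/
lemma my_clear_of {R : Type*} [CommRing R] (A : Matrix (Fin 2) (Fin 2) R)
    (V W : Matrix (Fin 2) (Fin 2) R)
    (hV : IsUnit V) (hW : IsUnit W) (b c d : R)
    (hA : A = V * !![1, b; c, d] * W) : IsClearElem A := by
  set Rm : Matrix (Fin 2) (Fin 2) R := !![1, b+1; c+1, (b+1)*(c+1)-1] with hRm
  set U : Matrix (Fin 2) (Fin 2) R := !![0, -1; -1, d - ((b+1)*(c+1)-1)] with hU
  have hsplit : !![1, b; c, d] = Rm + U := by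
    ext i j
    fin_cases i <;> fin_cases j <;> simp [hRm, hU] <;> ring
  have hRu : IsUnit Rm := by
    rw [Matrix.isUnit_iff_isUnit_det, hRm, Matrix.det_fin_two_of]
    refine IsUnit.of_mul_eq_one (-1) ?_
    ring
  have hUu : IsUnit U := by
    rw [Matrix.isUnit_iff_isUnit_det, hU, Matrix.det_fin_two_of]
    refine IsUnit.of_mul_eq_one (-1) ?_
    ring
  refine ⟨V * Rm * W, V * U * W, my_ureg ((hV.mul hRu).mul hW), (hV.mul hUu).mul hW, ?_⟩
  rw [hA, hsplit]
  noncomm_ring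

variable {R : Type*} [CommRing R] [IsDomain R] [IsPrincipalIdealRing R]

/-- Bezout identity in a PID. -/
lemma my_bezout (a c : R) : ∃ g p q a' c', p*a + q*c = g ∧ a = g*a' ∧ c = g*c' := by
  obtain ⟨g, hg⟩ := (IsPrincipalIdealRing.principal (Ideal.span {a, c})).principal
  have ha : a ∈ Ideal.span {a, c} := Ideal.subset_span (by simp)
  have hc : c ∈ Ideal.span {a, c} := Ideal.subset_span (by simp)
  rw [hg] at ha hc
  obtain ⟨a', ha'⟩ := Ideal.mem_span_singleton.mp ha
  obtain ⟨c', hc'⟩ := Ideal.mem_span_singleton.mp hc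
  have hgmem : g ∈ Ideal.span {a, c} := by rw [hg]; exact Ideal.subset_span rfl
  obtain ⟨p, q, hpq⟩ := Ideal.mem_span_pair.mp hgmem
  exact ⟨g, p, q, a', c', hpq, ha', hc'⟩

open UniqueFactorizationMonoid in
/-- The key arithmetic lemma: if `g ≠ 0` and `(g, B, D)` is unimodular, then
`(g, B + t*D)` is unimodular for a suitable `t`. -/
lemma my_T {g B D : R} (hg : g ≠ 0) (h : ∃ α β γ, α*g + β*B + γ*D = 1) :
    ∃ t u v, u*g + v*(B + t*D) = 1 := by
  classical
  obtain ⟨α, β, γ, hcombo⟩ := h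
  set t : R := ((factors g).filter (fun q => ¬ q ∣ B)).prod with ht
  have ht1 : ∀ p : R, Prime p → p ∣ g → ¬ p ∣ B → p ∣ t := by
    intro p hp hpg hpB
    obtain ⟨q, hq, hassoc⟩ := exists_mem_factors_of_dvd hg hp.irreducible hpg
    have hqB : ¬ q ∣ B := fun hd => hpB (hassoc.dvd.trans hd)
    exact hassoc.dvd.trans (Multiset.dvd_prod (Multiset.mem_filter.mpr ⟨hq, hqB⟩))
  have ht2 : ∀ p : R, Prime p → p ∣ B → ¬ p ∣ t := by
    intro p hp hpB hpt
    obtain ⟨q, hq, hpq⟩ := hp.exists_mem_multiset_dvd hpt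
    obtain ⟨hqf, hqB⟩ := Multiset.mem_filter.mp hq
    have hq' : Prime q := prime_of_factor q hqf
    have : Associated p q := hp.irreducible.associated_of_dvd hq'.irreducible hpq
    exact hqB (this.symm.dvd.trans hpB)
  refine ⟨t, ?_⟩
  obtain ⟨δ, hδ⟩ := (IsPrincipalIdealRing.principal (Ideal.span {g, B + t*D})).principal
  have hδg : δ ∣ g := by
    have : g ∈ Ideal.span {g, B + t*D} := Ideal.subset_span (by simp)
    rw [hδ] at this; exact Ideal.mem_span_singleton.mp this
  have hδx : δ ∣ B + t*D := by
    have : B + t*D ∈ Ideal.span {g, B + t*D} := Ideal.subset_span (by simp)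
    rw [hδ] at this; exact Ideal.mem_span_singleton.mp this
  have hδu : IsUnit δ := by
    by_contra hnu
    have hδ0 : δ ≠ 0 := fun h0 => hg (by simpa [h0] using hδg)
    obtain ⟨p, hpf⟩ := UniqueFactorizationMonoid.exists_mem_factors hδ0 hnu
    have hp : Prime p := prime_of_factor p hpf
    have hpδ : p ∣ δ := UniqueFactorizationMonoid.dvd_of_mem_factors hpf
    have hpg : p ∣ g := hpδ.trans hδg
    have hpx : p ∣ B + t*D := hpδ.trans hδx
    by_cases hpB : p ∣ B
    · have hptD : p ∣ t*D := (dvd_add_right hpB).mp hpx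
      rcases hp.dvd_mul.mp hptD with h1 | h1
      · exact ht2 p hp hpB h1
      · exact hp.not_unit (isUnit_of_dvd_one (by
          have : p ∣ α*g + β*B + γ*D :=
            dvd_add (dvd_add (Dvd.dvd.mul_left hpg α) (Dvd.dvd.mul_left hpB β))
              (Dvd.dvd.mul_left h1 γ)
          rwa [hcombo] at this))
    · have hpt : p ∣ t := ht1 p hp hpg hpB
      exact hpB (by
        have : p ∣ (B + t*D) - t*D := dvd_sub hpx (hpt.mul_right D)
        simpa using this)
  have htop : Ideal.span ({g, B + t*D} : Set R) = ⊤ := by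
    rw [hδ]; exact Ideal.span_singleton_eq_top.mpr hδu
  have : (1 : R) ∈ Ideal.span ({g, B + t*D} : Set R) := htop ▸ Submodule.mem_top
  obtain ⟨u, v, huv⟩ := Ideal.mem_span_pair.mp this
  exact ⟨u, v, huv⟩

set_option maxHeartbeats 1000000 in
/-- A 2×2 matrix with unimodular entries and nonzero first column is equivalent to a
matrix with `1` in the upper-left corner. -/
lemma my_key (A : Matrix (Fin 2) (Fin 2) R)
    (hcombo : ∃ α β γ δ, α * A 0 0 + β * A 0 1 + γ * A 1 0 + δ * A 1 1 = 1)
    (hcol : ¬ (A 0 0 = 0 ∧ A 1 0 = 0)) :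
    ∃ V W : Matrix (Fin 2) (Fin 2) R, IsUnit V ∧ IsUnit W ∧
      ∃ b c d : R, A = V * !![1, b; c, d] * W := by
  obtain ⟨α, β, γ, δ, hcombo⟩ := hcombo
  obtain ⟨g, p, q, a', c', hpq, ha, hc⟩ := my_bezout (A 0 0) (A 1 0)
  have hg : g ≠ 0 := by
    rintro rfl
    exact hcol ⟨by rw [ha, zero_mul], by rw [hc, zero_mul]⟩
  have h1 : p*a' + q*c' = 1 := by
    apply mul_left_cancel₀ hg
    rw [mul_one]
    linear_combination hpq - p*ha - q*hc
  obtain ⟨t, u, v, huv⟩ := my_T (B := p * A 0 1 + q * A 1 1) (D := a' * A 1 1 - c' * A 0 1) hg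
    ⟨α*a' + γ*c', β*a' + δ*c', δ*p - β*q,
      by linear_combination hcombo + (β * A 0 1 + δ * A 1 1) * h1 - α * ha - γ * hc⟩
  set X : Matrix (Fin 2) (Fin 2) R := !![p - t*c', q + t*a'; -c', a'] with hX
  set Q : Matrix (Fin 2) (Fin 2) R :=
    !![u, -((p * A 0 1 + q * A 1 1) + t*(a' * A 1 1 - c' * A 0 1)); v, g] with hQ
  have hdX : IsUnit X.det := by
    rw [hX, Matrix.det_fin_two_of]
    have : (p - t*c') * a' - (q + t*a') * (-c') = 1 := by linear_combination h1
    rw [this]; exact isUnit_one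
  have hdQ : IsUnit Q.det := by
    rw [hQ, Matrix.det_fin_two_of]
    have : u * g - (-((p * A 0 1 + q * A 1 1) + t*(a' * A 1 1 - c' * A 0 1))) * v = 1 := by
      linear_combination huv
    rw [this]; exact isUnit_one
  have hB00 : (X * A * Q) 0 0 = 1 := by
    have e1 : (X * A * Q) 0 0 =
        (X 0 0 * A 0 0 + X 0 1 * A 1 0) * Q 0 0 + (X 0 0 * A 0 1 + X 0 1 * A 1 1) * Q 1 0 := by
      simp [Matrix.mul_apply, Fin.sum_univ_two]
    rw [e1, hX, hQ]
    simp
    linear_combination huv + u*t*a' * hc - u*t*c' * ha + u*hpq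
  have hVu : IsUnit X⁻¹ := by
    rw [Matrix.isUnit_iff_isUnit_det, Matrix.det_nonsing_inv]
    exact isUnit_ringInverse.mpr hdX
  have hWu : IsUnit Q⁻¹ := by
    rw [Matrix.isUnit_iff_isUnit_det, Matrix.det_nonsing_inv]
    exact isUnit_ringInverse.mpr hdQ
  refine ⟨X⁻¹, Q⁻¹, hVu, hWu, (X*A*Q) 0 1, (X*A*Q) 1 0, (X*A*Q) 1 1, ?_⟩
  have hmat := Matrix.eta_fin_two (X*A*Q)
  rw [hB00] at hmat
  rw [← hmat]
  have hassoc : X⁻¹ * (X * A * Q) * Q⁻¹ = (X⁻¹ * X) * A * (Q * Q⁻¹) := by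
    simp only [Matrix.mul_assoc]
  rw [hassoc, Matrix.nonsing_inv_mul _ hdX, Matrix.mul_nonsing_inv _ hdQ,
    Matrix.one_mul, Matrix.mul_one]

/-- Fullness gives a unimodular combination of the entries. -/
lemma my_full_combo {R : Type*} [CommRing R] (A : Matrix (Fin 2) (Fin 2) R)
    (hfull : A.IsFull) :
    ∃ α β γ δ, α * A 0 0 + β * A 0 1 + γ * A 1 0 + δ * A 1 1 = 1 := by
  classical
  set I : Ideal R := Ideal.span {A 0 0, A 0 1, A 1 0, A 1 1} with hI
  have hentry : ∀ i j, A i j ∈ I := by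
    intro i j
    apply Ideal.subset_span
    fin_cases i <;> fin_cases j <;> simp
  set J : TwoSidedIdeal (Matrix (Fin 2) (Fin 2) R) :=
    TwoSidedIdeal.mk' {M | ∀ i j, M i j ∈ I}
      (fun i j => by simp)
      (fun hx hy i j => by simpa using I.add_mem (hx i j) (hy i j))
      (fun hx i j => by simpa using I.neg_mem (hx i j))
      (fun {x y} hy i j => by
        simp only [Matrix.mul_apply]
        exact Ideal.sum_mem I (fun k _ => I.mul_mem_left _ (hy k j)))
      (fun {x y} hx i j => by
        simp only [Matrix.mul_apply]
        exact Ideal.sum_mem I (fun k _ => I.mul_mem_right _ (hx i k))) with hJ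
  have hAJ : A ∈ J := by rw [hJ]; exact (TwoSidedIdeal.mem_mk' _ _ _ _ _ _ _).mpr hentry
  have h1 : (1 : Matrix (Fin 2) (Fin 2) R) ∈ TwoSidedIdeal.span {A} := by
    rw [hfull]; trivial
  have h1J : (1 : Matrix (Fin 2) (Fin 2) R) ∈ J :=
    TwoSidedIdeal.mem_span_iff.mp h1 J (by simpa using hAJ)
  have h1I : (1 : R) ∈ I := by
    have := (TwoSidedIdeal.mem_mk' _ _ _ _ _ _ _).mp h1J 0 0
    simpa using this
  rw [hI] at h1I
  rw [show ({A 0 0, A 0 1, A 1 0, A 1 1} : Set R)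
      = insert (A 0 0) (insert (A 0 1) (insert (A 1 0) {A 1 1})) from rfl] at h1I
  obtain ⟨α, z1, hz1, e1⟩ := Ideal.mem_span_insert.mp h1I
  obtain ⟨β, z2, hz2, e2⟩ := Ideal.mem_span_insert.mp hz1
  obtain ⟨γ, z3, hz3, e3⟩ := Ideal.mem_span_insert.mp hz2
  obtain ⟨δ, e4⟩ := Ideal.mem_span_singleton'.mp hz3
  exact ⟨α, β, γ, δ, by rw [e1, e2, e3, ← e4]; ring⟩

end ClearAux

theorem stmt_13 {R : Type*} [CommRing R] [IsDomain R] [IsPrincipalIdealRing R]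
    (A : Matrix (Fin 2) (Fin 2) R) (hfull : A.IsFull) :
    IsClearElem A := by
  obtain ⟨α, β, γ, δ, hcombo⟩ := my_full_combo A hfull
  by_cases h0 : A 0 0 = 0 ∧ A 1 0 = 0
  · -- first column vanishes: work with A * swap
    obtain ⟨h00, h10⟩ := h0
    set σ : Matrix (Fin 2) (Fin 2) R := !![0, 1; 1, 0] with hσ
    have hσσ : σ * σ = 1 := by
      ext i j
      fin_cases i <;> fin_cases j <;> simp [hσ, Matrix.mul_apply, Fin.sum_univ_two]
    have he : ∀ i, (A * σ) i 0 = A i 1 ∧ (A * σ) i 1 = A i 0 := by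
      intro i
      constructor <;> simp [hσ, Matrix.mul_apply, Fin.sum_univ_two]
    obtain ⟨V, W, hV, hW, b, c, d, hVW⟩ := my_key (A * σ)
      ⟨β, α, δ, γ, by
        rw [(he 0).1, (he 0).2, (he 1).1, (he 1).2]
        linear_combination hcombo⟩
      (by
        rintro ⟨e1, e2⟩
        rw [(he 0).1] at e1
        rw [(he 1).1] at e2
        rw [h00, h10, e1, e2] at hcombo
        simp at hcombo)
    have hA : A = V * !![1, b; c, d] * (W * σ) := by
      have : A * σ * σ = A := by rw [Matrix.mul_assoc, hσσ, Matrix.mul_one]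
      rw [← this, hVW]
      simp only [Matrix.mul_assoc]
    have hσu : IsUnit σ := by
      rw [Matrix.isUnit_iff_isUnit_det, hσ, Matrix.det_fin_two_of]
      refine IsUnit.of_mul_eq_one (-1) ?_
      ring
    exact my_clear_of A V (W * σ) hV (hW.mul hσu) b c d hA
  · obtain ⟨V, W, hV, hW, b, c, d, hVW⟩ := my_key A ⟨α, β, γ, δ, hcombo⟩ h0
    exact my_clear_of A V W hV hW b c d hVW
end

section
/- Let R be an associative ring with identity in which 2 is a unit. Then every unit-regular element of R is the sum of two units of R. -/
theorem stmt_15 {R : Type*} [Ring R] (h2 : IsUnit (2 : R))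
    (a : R) (ha : IsUnitRegular a) :
    ∃ u v : R, IsUnit u ∧ IsUnit v ∧ a = u + v := by
  obtain ⟨u, hu, hau⟩ := ha
  set e := a * u with he_def
  have he : e * e = e := by
    rw [he_def, ← mul_assoc, hau]
  have hw : IsUnit (2 * e - 1) := by
    have hww : (2 * e - 1) * (2 * e - 1) = 1 := by
      have h4 : (2 * e - 1) * (2 * e - 1) = 4 * (e * e) - 4 * e + 1 := by noncomm_ring
      rw [h4, he]; noncomm_ring
    exact ⟨⟨_, _, hww, hww⟩, rfl⟩
  set t : R := ((h2.unit⁻¹ : Rˣ) : R) with ht_def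
  set v : R := ((hu.unit⁻¹ : Rˣ) : R) with hv_def
  have ht : IsUnit t := (h2.unit⁻¹).isUnit
  have hv : IsUnit v := (hu.unit⁻¹).isUnit
  have ht2 : t * 2 = 1 := by
    have := h2.unit⁻¹.mul_inv
    simpa [ht_def, h2.unit_spec] using h2.unit.inv_mul
  have hev : e * v = a := by
    rw [he_def, mul_assoc, hv_def]
    have : u * ((hu.unit⁻¹ : Rˣ) : R) = 1 := by
      simpa [hu.unit_spec] using hu.unit.mul_inv
    rw [this, mul_one]
  refine ⟨t * (2 * e - 1) * v, t * v, (ht.mul hw).mul hv, ht.mul hv, ?_⟩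
  have : t * (2 * e - 1) * v + t * v = (t * 2) * (e * v) := by noncomm_ring
  rw [this, ht2, one_mul, hev]
end
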